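/- arXiv:1003.0373 — 4 statements merged into one kernel-verified Lean document; each statement's English description precedes it below -/
import Mathlib

section
/- Let R be a commutative ring in which 2 is invertible and E an R-module, with data: a symmetric bilinear form B : E × E → R, R-linear in each argument; a bracket ∘ : E × E → E, additive in each argument; and a map δ assigning to each e ∈ E an additive map δ(e) : R → R. Then the conjunction of (CJ2) δ(e₁)(B(e₂,e₃)) = B(e₁, e₂∘e₃ + e₃∘e₂) and (CJ3) δ(e₁)(B(e₂,e₃)) = B(e₁∘e₂, e₃) + B(e₂, e₁∘e₃), for all e₁, e₂, e₃ ∈ E, is equivalent to the conjunction of (CJ'3) B(e₁∘e, e) = B(e₁, e∘e) and (CJ'4) δ(e₁)(B(e,e)) = 2·B(e₁∘e, e), for all e₁, e ∈ E. -/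
/-- **Algebraic part of the equivalence of the two definitions of Courant-Jacobi algebroid**:
the conjunction of axioms CJ2 and CJ3 is equivalent to the conjunction of axioms CJ'3 and CJ'4,
over a commutative ring `R` in which `2` is invertible. -/
theorem cj2_cj3_iff_cj3'_cj4'
    {R E : Type*} [CommRing R] [Invertible (2 : R)] [AddCommGroup E] [Module R E]
    (B : E → E → R)
    (hB_symm : ∀ x y, B x y = B y x)
    (hB_addl : ∀ x y z, B (x + y) z = B x z + B y z)
    (hB_smull : ∀ (r : R) (x z : E), B (r • x) z = r * B x z)
    (hB_addr : ∀ x y z, B x (y + z) = B x y + B x z)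
    (hB_smulr : ∀ (r : R) (x z : E), B x (r • z) = r * B x z)
    (br : E → E → E)
    (hbr_addl : ∀ x y z, br (x + y) z = br x z + br y z)
    (hbr_addr : ∀ x y z, br x (y + z) = br x y + br x z)
    (δ : E → R → R)
    (hδ_add : ∀ (e : E) (f g : R), δ e (f + g) = δ e f + δ e g) :
    ((∀ e₁ e₂ e₃ : E, δ e₁ (B e₂ e₃) = B e₁ (br e₂ e₃ + br e₃ e₂)) ∧
        (∀ e₁ e₂ e₃ : E, δ e₁ (B e₂ e₃) = B (br e₁ e₂) e₃ + B e₂ (br e₁ e₃))) ↔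
      ((∀ e₁ e : E, B (br e₁ e) e = B e₁ (br e e)) ∧
        (∀ e₁ e : E, δ e₁ (B e e) = 2 * B (br e₁ e) e)) := by
  have cancel2 : ∀ a b : R, 2 * a = 2 * b → a = b := by
    intro a b h
    have := congrArg (fun x => ⅟(2:R) * x) h
    simpa [← mul_assoc] using this
  constructor
  · rintro ⟨h2, h3⟩
    constructor
    · intro e₁ e
      have a := h2 e₁ e e
      have b := h3 e₁ e e
      rw [hB_addr] at a
      rw [hB_symm e (br e₁ e)] at b
      apply cancel2
      rw [two_mul, two_mul, ← a, ← b]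
    · intro e₁ e
      have b := h3 e₁ e e
      rw [hB_symm e (br e₁ e)] at b
      rw [b, two_mul]
  · rintro ⟨h3', h4'⟩
    have cj3 : ∀ e₁ x y : E, δ e₁ (B x y) = B (br e₁ x) y + B x (br e₁ y) := by
      intro e₁ x y
      have h := h4' e₁ (x + y)
      simp only [hB_addl, hB_addr, hδ_add, hbr_addr, h4' e₁ x, h4' e₁ y] at h
      apply cancel2
      have hsym : B x (br e₁ y) = B (br e₁ y) x := hB_symm _ _
      have hδsym : δ e₁ (B y x) = δ e₁ (B x y) := by rw [hB_symm y x]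
      linear_combination h - hδsym - 2 * hsym
    have cj2 : ∀ e₁ x y : E, B (br e₁ x) y + B x (br e₁ y) = B e₁ (br x y + br y x) := by
      intro e₁ x y
      have h := h3' e₁ (x + y)
      simp only [hbr_addl, hbr_addr, hB_addl, hB_addr] at h ⊢
      have hx := h3' e₁ x
      have hy := h3' e₁ y
      have hsym : B x (br e₁ y) = B (br e₁ y) x := hB_symm _ _
      linear_combination h - hx - hy + hsym
    exact ⟨fun e₁ e₂ e₃ => by rw [cj3 e₁ e₂ e₃, cj2 e₁ e₂ e₃], cj3⟩
end

section
/- Let R be a commutative ring and E an R-module, with data: a bilinear form B : E × E → R, R-linear in each argument, which is nondegenerate in the sense that if B(e, x) = 0 for all e ∈ E then x = 0; a bracket ∘ : E × E → E; maps δ : E → (maps R → R) and θ : E → R such that each δ(e) satisfies the first-order operator identity δ(e)(fg) = δ(e)(f)·g + f·δ(e)(g) − θ(e)·f·g for all f, g ∈ R. Assume the axiom (CJ3): δ(e₁)(B(e₂,e₃)) = B(e₁∘e₂, e₃) + B(e₂, e₁∘e₃) for all e₁, e₂, e₃ ∈ E. Then for all e₁, e₃ ∈ E and f ∈ R one has e₁∘(f·e₃)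 = f·(e₁∘e₃) + (δ(e₁)(f) − f·θ(e₁))·e₃. -/
/-- **The Leibniz-type formula for the Courant-Jacobi bracket against multiplication of a
section by a function**, derived from axiom CJ3 and nondegeneracy of the pairing:
`e₁ ∘ (f • e₃) = f • (e₁ ∘ e₃) + (δ e₁ f - f * θ e₁) • e₃`. -/
theorem bracket_smul_formula
    {R E : Type*} [CommRing R] [AddCommGroup E] [Module R E]
    (B : E → E → R)
    (hB_addl : ∀ x y z, B (x + y) z = B x z + B y z)
    (hB_smull : ∀ (r : R) (x z : E), B (r • x) z = r * B x z)
    (hB_addr : ∀ x y z, B x (y + z) = B x y + B x z)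
    (hB_smulr : ∀ (r : R) (x z : E), B x (r • z) = r * B x z)
    (hB_nondeg : ∀ x : E, (∀ e : E, B e x = 0) → x = 0)
    (br : E → E → E)
    (δ : E → R → R) (θ : E → R)
    (hδ_leibniz : ∀ (e : E) (f g : R), δ e (f * g) = δ e f * g + f * δ e g - θ e * f * g)
    (hCJ3 : ∀ e₁ e₂ e₃ : E, δ e₁ (B e₂ e₃) = B (br e₁ e₂) e₃ + B e₂ (br e₁ e₃)) :
    ∀ (e₁ e₃ : E) (f : R),
      br e₁ (f • e₃) = f • br e₁ e₃ + (δ e₁ f - f * θ e₁) • e₃ := by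
  intro e₁ e₃ f
  have key : ∀ e : E, B e (br e₁ (f • e₃) - (f • br e₁ e₃ + (δ e₁ f - f * θ e₁) • e₃)) = 0 := by
    intro e
    have hsub : ∀ x y : E, B e (x - y) = B e x - B e y := by
      intro x y
      have := hB_addr e (x - y) y
      simp only [sub_add_cancel] at this
      linear_combination -this
    rw [hsub]
    have h1 := hCJ3 e₁ e e₃
    have h2 := hCJ3 e₁ e (f • e₃)
    rw [hB_smulr] at h2
    rw [hδ_leibniz e₁ f (B e e₃)] at h2
    rw [hB_smulr] at h2
    rw [hB_addr, hB_smulr, hB_smulr]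
    linear_combination f * h1 - h2
  have := hB_nondeg _ key
  have h := sub_eq_zero.mp this
  exact h
end

section
/- Let R be a commutative ring and E an R-module, with data: a bracket ∘ : E × E → E additive in its second argument; a map δ assigning to each e ∈ E an additive map δ(e) : R → R; and a map θ : E → R, such that each δ(e) satisfies δ(e)(fg) = δ(e)(f)·g + f·δ(e)(g) − θ(e)·f·g for all f, g ∈ R. Assume: (i) the Jacobi/Leibniz identity e₁∘(e₂∘e₃) = (e₁∘e₂)∘e₃ + e₂∘(e₁∘e₃) for all e₁, e₂, e₃ ∈ E, and (ii) the scalar formula e∘(f·e') = f·(e∘e') + (δ(e)(f) − f·θ(e))·e' for all e, e' ∈ E and f ∈ R. Then for all e₁, e₂, e₃ ∈ E and f ∈ R: (δ(e₁∘e₂)(f) − θ(e₁∘e₂)·f)·e₃ = (δ(e₁)(δ(e₂)(f)) − δ(e₂)(δ(e₁)(f)) − δ(e₁)(θ(e₂))·f + δ(e₂)(θ(e₁))·f)·e₃. -/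
/-- **Expansion of `e₁ ∘ (e₂ ∘ (f • e₃))` in two ways**, using the Jacobi/Leibniz identity CJ1
and the Leibniz-type scalar formula for the bracket, identifying the first-order operator of
the anchor of `e₁ ∘ e₂` with the commutator of the operators of `e₁` and `e₂`. -/
theorem anchor_operator_commutator
    {R E : Type*} [CommRing R] [AddCommGroup E] [Module R E]
    (br : E → E → E)
    (hbr_addr : ∀ x y z, br x (y + z) = br x y + br x z)
    (δ : E → R → R)
    (hδ_add : ∀ (e : E) (f g : R), δ e (f + g) = δ e f + δ e g)
    (θ : E → R)
    (hδ_leibniz : ∀ (e : E) (f g : R), δ e (f * g) = δ e f * g + f * δ e g - θ e * f * g)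
    (hCJ1 : ∀ e₁ e₂ e₃ : E, br e₁ (br e₂ e₃) = br (br e₁ e₂) e₃ + br e₂ (br e₁ e₃))
    (hscalar : ∀ (e e' : E) (f : R),
      br e (f • e') = f • br e e' + (δ e f - f * θ e) • e') :
    ∀ (e₁ e₂ e₃ : E) (f : R),
      (δ (br e₁ e₂) f - θ (br e₁ e₂) * f) • e₃ =
        (δ e₁ (δ e₂ f) - δ e₂ (δ e₁ f) - δ e₁ (θ e₂) * f + δ e₂ (θ e₁) * f) • e₃ := by
  intro e₁ e₂ e₃ f
  have hδ_sub : ∀ (e : E) (f g : R), δ e (f - g) = δ e f - δ e g := by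
    intro e f g
    have h := hδ_add e (f - g) g
    rw [sub_add_cancel] at h
    exact eq_sub_of_add_eq h.symm
  set A₁ := δ e₁ f - f * θ e₁ with hA₁
  set A₂ := δ e₂ f - f * θ e₂ with hA₂
  -- Expansion 1
  have expA : br e₁ (br e₂ (f • e₃)) =
      f • br e₁ (br e₂ e₃) + A₁ • br e₂ e₃ + A₂ • br e₁ e₃
        + (δ e₁ A₂ - A₂ * θ e₁) • e₃ := by
    rw [hscalar e₂ e₃ f, hbr_addr, hscalar e₁ (br e₂ e₃) f, hscalar e₁ e₃ A₂]
    abel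
  -- Expansion 2 via CJ1
  have expB : br e₁ (br e₂ (f • e₃)) =
      f • br (br e₁ e₂) e₃ + f • br e₂ (br e₁ e₃) + A₂ • br e₁ e₃ + A₁ • br e₂ e₃
        + (δ (br e₁ e₂) f - f * θ (br e₁ e₂)) • e₃ + (δ e₂ A₁ - A₁ * θ e₂) • e₃ := by
    rw [hCJ1 e₁ e₂ (f • e₃), hscalar (br e₁ e₂) e₃ f, hscalar e₁ e₃ f, hbr_addr,
      hscalar e₂ (br e₁ e₃) f, hscalar e₂ e₃ A₁]
    abel
  have h := expA.symm.trans expB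
  rw [hCJ1 e₁ e₂ e₃, smul_add] at h
  have key : (δ (br e₁ e₂) f - f * θ (br e₁ e₂)) • e₃ =
      (δ e₁ A₂ - A₂ * θ e₁) • e₃ - (δ e₂ A₁ - A₁ * θ e₂) • e₃ := by
    linear_combination (norm := module) -h
  have hc : δ e₁ (δ e₂ f) - δ e₂ (δ e₁ f) - δ e₁ (θ e₂) * f + δ e₂ (θ e₁) * f =
      (δ e₁ A₂ - A₂ * θ e₁) - (δ e₂ A₁ - A₁ * θ e₂) := by
    rw [hA₁, hA₂, hδ_sub, hδ_sub, hδ_leibniz, hδ_leibniz]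
    ring
  have hc' : δ (br e₁ e₂) f - θ (br e₁ e₂) * f = δ (br e₁ e₂) f - f * θ (br e₁ e₂) := by ring
  rw [hc', hc, key, ← sub_smul]
end

section
/- Let R be a commutative ring and E an R-module, with data: a form B : E × E → R additive in each argument; a bracket ∘ : E × E → E additive in each argument; and a map δ assigning to each e ∈ E an additive map δ(e) : R → R. Assume: (CJ1) e₁∘(e₂∘e₃) = (e₁∘e₂)∘e₃ + e₂∘(e₁∘e₃) for all e₁, e₂, e₃ ∈ E, and (CJ3) δ(e₁)(B(e₂,e₃)) = B(e₁∘e₂, e₃) + B(e₂, e₁∘e₃) for all e₁, e₂, e₃ ∈ E. Then for all e₁, e₂, e₃, e₄ ∈ E: δ(e₁∘e₂)(B(e₃,e₄)) = δ(e₁)(δ(e₂)(B(e₃,e₄))) − δ(e₂)(δ(e₁)(B(e₃,e₄))). -/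
/-- From axioms CJ1 and CJ3, the operator associated to the anchor of `e₁ ∘ e₂` agrees with
the commutator of the operators of `e₁` and `e₂` on every function of the form `B e₃ e₄`. -/
theorem anchor_commutator_on_pairings
    {R E : Type*} [CommRing R] [AddCommGroup E] [Module R E]
    (B : E → E → R)
    (hB_addl : ∀ x y z, B (x + y) z = B x z + B y z)
    (hB_addr : ∀ x y z, B x (y + z) = B x y + B x z)
    (br : E → E → E)
    (hbr_addl : ∀ x y z, br (x + y) z = br x z + br y z)
    (hbr_addr : ∀ x y z, br x (y + z) = br x y + br x z)
    (δ : E → R → R)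
    (hδ_add : ∀ (e : E) (f g : R), δ e (f + g) = δ e f + δ e g)
    (hCJ1 : ∀ e₁ e₂ e₃ : E, br e₁ (br e₂ e₃) = br (br e₁ e₂) e₃ + br e₂ (br e₁ e₃))
    (hCJ3 : ∀ e₁ e₂ e₃ : E, δ e₁ (B e₂ e₃) = B (br e₁ e₂) e₃ + B e₂ (br e₁ e₃)) :
    ∀ e₁ e₂ e₃ e₄ : E,
      δ (br e₁ e₂) (B e₃ e₄) = δ e₁ (δ e₂ (B e₃ e₄)) - δ e₂ (δ e₁ (B e₃ e₄)) := by
  intro e₁ e₂ e₃ e₄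
  rw [eq_sub_iff_add_eq]
  simp only [hCJ3, hδ_add]
  rw [hCJ1 e₁ e₂ e₃, hCJ1 e₁ e₂ e₄]
  simp only [hB_addl, hB_addr]
  ring
end
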